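/- Let μ and μ̃ be two A∞ structures on the same pre-A∞ category C which agree in all operations μ^k = μ̃^k for k < s, where s ≥ 3, and such that both restrict to a common underlying graded category structure (μ¹ = μ̃¹ = 0 and μ² = μ̃² given by composition). Then the difference c := μ̃^s − μ^s, viewed as a Hochschild cochain of length s, is a Hochschild cocycle of cohomological degree 2 − s with respect to the Hochschild differential [μ₂, −] determined by μ² and μ¹ = 0. -/

import Mathlib

/-- Let `μ` and `μ'` be two A∞ structures on the same pre-A∞ category, agreeing in all
operations of length `< s` (where `s ≥ 3`), and restricting to a common underlying graded
category structure (`μ¹ = μ'¹ = 0`, and `μ² = μ'²` is the composition).  We record the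
Gerstenhaber product of (degree-2) Hochschild cochains through its bihomogeneous length
components `comp p q : CC²(len p) × CC²(len q) → CC³(len p+q−1)`, which are biadditive; the
A∞ relations `μ ∘ μ = 0` and `μ' ∘ μ' = 0` read, in each length `m`,
`∑_{p+q=m+1} comp p q (μ p) (μ q) = 0`.  Then `c := μ'^s − μ^s` is a Hochschild cocycle
(of cohomological degree `2 − s`) for the Hochschild differential `[μ², −]` determined by
`μ²` (and `μ¹ = 0`): that is, `μ² ∘ c + c ∘ μ² = 0`. -/
theorem stmt_10 {W₂ W₃ : Type*} [AddCommGroup W₂] [AddCommGroup W₃]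
    (comp : ℕ → ℕ → W₂ → W₂ → W₃)
    (haddl : ∀ p q x x' y, comp p q (x + x') y = comp p q x y + comp p q x' y)
    (haddr : ∀ p q x y y', comp p q x (y + y') = comp p q x y + comp p q x y')
    (μ μ' : ℕ → W₂)
    (hμ0 : μ 0 = 0) (hμ1 : μ 1 = 0) (hμ'0 : μ' 0 = 0) (hμ'1 : μ' 1 = 0)
    (hμ : ∀ m : ℕ,
      ∑ pq ∈ Finset.HasAntidiagonal.antidiagonal (m + 1), comp pq.1 pq.2 (μ pq.1) (μ pq.2) = 0)
    (hμ' : ∀ m : ℕ,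
      ∑ pq ∈ Finset.HasAntidiagonal.antidiagonal (m + 1), comp pq.1 pq.2 (μ' pq.1) (μ' pq.2) = 0)
    (s : ℕ) (hs : 3 ≤ s) (hagree : ∀ m < s, μ' m = μ m) :
    comp 2 s (μ 2) (μ' s - μ s) + comp s 2 (μ' s - μ s) (μ 2) = 0 := by
  have h0l : ∀ p q y, comp p q 0 y = 0 := by
    intro p q y
    have := haddl p q 0 0 y
    simpa using this
  have h0r : ∀ p q x, comp p q x 0 = 0 := by
    intro p q x
    have := haddr p q x 0 0
    simpa using this
  have hsubl : ∀ p q x x' y, comp p q (x - x') y = comp p q x y - comp p q x' y := by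
    intro p q x x' y
    have h := haddl p q x' (x - x') y
    rw [add_sub_cancel] at h
    rw [h]; abel
  have hsubr : ∀ p q x y y', comp p q x (y - y') = comp p q x y - comp p q x y' := by
    intro p q x y y'
    have h := haddr p q x y' (y - y')
    rw [add_sub_cancel] at h
    rw [h]; abel
  set g : ℕ × ℕ → W₃ := fun pq =>
    comp pq.1 pq.2 (μ' pq.1) (μ' pq.2) - comp pq.1 pq.2 (μ pq.1) (μ pq.2) with hg
  have hsum : ∑ pq ∈ Finset.HasAntidiagonal.antidiagonal (s + 2), g pq = 0 := by
    rw [hg, Finset.sum_sub_distrib]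
    have h1 := hμ' (s + 1)
    have h2 := hμ (s + 1)
    rw [show s + 1 + 1 = s + 2 from rfl] at h1 h2
    rw [h1, h2, sub_zero]
  have hkey : ∑ pq ∈ Finset.HasAntidiagonal.antidiagonal (s + 2), g pq = g (2, s) + g (s, 2) := by
    apply Finset.sum_eq_add (2, s) (s, 2)
    · intro h; injection h with h1 h2; omega
    · rintro k hk ⟨hk1, hk2⟩
      rw [Finset.HasAntidiagonal.mem_antidiagonal] at hk
      rcases k with ⟨p, q⟩
      by_cases hp0 : p = 0
      · subst hp0; simp only [hg]; rw [hμ'0, hμ0, h0l, h0l, sub_self]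
      by_cases hp1 : p = 1
      · subst hp1; simp only [hg]; rw [hμ'1, hμ1, h0l, h0l, sub_self]
      by_cases hq0 : q = 0
      · subst hq0; simp only [hg]; rw [hμ'0, hμ0, h0r, h0r, sub_self]
      by_cases hq1 : q = 1
      · subst hq1; simp only [hg]; rw [hμ'1, hμ1, h0r, h0r, sub_self]
      have hps : p < s := by
        rcases Nat.lt_or_ge p s with h | h
        · exact h
        · exfalso
          have hp : p = s := by omega
          have hq : q = 2 := by omega
          exact hk2 (by rw [hp, hq])
      have hqs : q < s := by
        rcases Nat.lt_or_ge q s with h | h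
        · exact h
        · exfalso
          have hp : p = 2 := by omega
          have hq : q = s := by omega
          exact hk1 (by rw [hp, hq])
      simp only [hg]
      rw [hagree p hps, hagree q hqs, sub_self]
    · intro h; exact absurd (Finset.HasAntidiagonal.mem_antidiagonal.mpr (by omega : 2 + s = s + 2)) h
    · intro h; exact absurd (Finset.HasAntidiagonal.mem_antidiagonal.mpr (by omega : s + 2 = s + 2)) h
  have hμ'2 : μ' 2 = μ 2 := hagree 2 (by omega)
  have hg1 : g (2, s) = comp 2 s (μ 2) (μ' s - μ s) := by
    simp only [hg, hμ'2, hsubr]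
  have hg2 : g (s, 2) = comp s 2 (μ' s - μ s) (μ 2) := by
    simp only [hg, hμ'2, hsubl]
  rw [← hg1, ← hg2, ← hkey, hsum]
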